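/- arXiv:1303.2870 — 3 statements merged into one kernel-verified Lean document; each statement's English description precedes it below -/
import Mathlib

section
/- Let ω > 0, a > 0, and c > 0 be real numbers. The function g(p) = ω log₂(1 + a p) − c p on the half-line p ≥ 0 attains its maximum at p* = max(ω/(c ln 2) − 1/a, 0); that is, g(p) ≤ g(p*) for every p ≥ 0. (Closed-form per-user power allocation, equation (19).) -/
/-- Equation (19): for `ω, a, c > 0`, the function
`g(p) = ω log₂(1 + a p) − c p` on `p ≥ 0` attains its maximum at
`p* = max (ω/(c ln 2) − 1/a) 0`. -/
theorem waterfilling_maximizes (ω a c : ℝ) (hω : 0 < ω) (ha : 0 < a) (hc : 0 < c) :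
    ∀ p : ℝ, 0 ≤ p →
      ω * Real.logb 2 (1 + a * p) - c * p ≤
        ω * Real.logb 2 (1 + a * max (ω / (c * Real.log 2) - 1 / a) 0)
          - c * max (ω / (c * Real.log 2) - 1 / a) 0 := by
  intro p hp
  have hL0 : 0 < Real.log 2 := Real.log_pos (by norm_num)
  set L := Real.log 2 with hL
  set q : ℝ := max (ω / (c * L) - 1 / a) 0 with hqdef
  have hq : 0 ≤ q := le_max_right _ _
  have h1p : 0 < 1 + a * p := by nlinarith
  have h1q : 0 < 1 + a * q := by nlinarith
  have hlog : Real.log (1 + a * p) - Real.log (1 + a * q) ≤ a * (p - q) / (1 + a * q) := by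
    have h := Real.log_le_sub_one_of_pos (show 0 < (1 + a * p) / (1 + a * q) by positivity)
    rw [Real.log_div (ne_of_gt h1p) (ne_of_gt h1q)] at h
    have heq : (1 + a * p) / (1 + a * q) - 1 = a * (p - q) / (1 + a * q) := by
      field_simp; ring
    linarith [heq ▸ h]
  have hkey : (p - q) * (ω * a / (L * (1 + a * q)) - c) ≤ 0 := by
    rcases le_or_gt (ω / (c * L) - 1 / a) 0 with h | h
    · have hq0 : q = 0 := max_eq_right h
      have h1 : ω * a / (L * (1 + a * q)) ≤ c := by
        rw [hq0, mul_zero, add_zero, mul_one, div_le_iff₀ hL0]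
        have h2 : ω / (c * L) ≤ 1 / a := by linarith
        rw [div_le_div_iff₀ (by positivity) ha] at h2
        linarith
      have hp' : 0 ≤ p - q := by rw [hq0]; linarith
      nlinarith
    · have hq0 : q = ω / (c * L) - 1 / a := max_eq_left h.le
      have h1 : 1 + a * q = a * ω / (c * L) := by
        rw [hq0]; field_simp; ring
      have h2 : ω * a / (L * (1 + a * q)) - c = 0 := by
        rw [h1]; field_simp; ring
      rw [h2, mul_zero]
  have hfac : ω * a / (L * (1 + a * q)) * (p - q) = ω / L * (a * (p - q) / (1 + a * q)) := by
    field_simp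
  have hmul := mul_le_mul_of_nonneg_left hlog (le_of_lt (div_pos hω hL0))
  have hfin : ω / L * (Real.log (1 + a * p) - Real.log (1 + a * q)) ≤ c * (p - q) := by
    calc ω / L * (Real.log (1 + a * p) - Real.log (1 + a * q))
        ≤ ω / L * (a * (p - q) / (1 + a * q)) := hmul
      _ = ω * a / (L * (1 + a * q)) * (p - q) := hfac.symm
      _ ≤ c * (p - q) := by nlinarith
  rw [Real.logb, Real.logb, ← hL]
  have hLne : L ≠ 0 := ne_of_gt hL0
  have : ω / L * (Real.log (1 + a * p) - Real.log (1 + a * q))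
      = ω * (Real.log (1 + a * p) / L) - ω * (Real.log (1 + a * q) / L) := by
    field_simp
  linarith [this ▸ hfin]
end

section
/- Suppose b_{ik} > 0 for all i, k, ω_k > 0 and a_k > 0 for all k, and μ is dual-feasible, i.e. μ_i ≥ 0 for all i, μ_i > 0 for at least one i, and β_{ij} μ_j ≤ μ_i for all i ≠ j. Define the water-filling powers p_k(μ) = max(ω_k/(ln 2 · ∑_i b_{ik} μ_i) − 1/a_k, 0). Then the pair (p(μ), 0) maximizes the Lagrangian over the nonnegative orthant: L(μ, p, e) ≤ L(μ, p(μ), 0) for all p with p_k ≥ 0 for all k and all e with e_{ij} ≥ 0 for all i ≠ j. -/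
open Finset

/-- Per-user key inequality: the water-filling level maximizes
`x ↦ ω logb 2 (1 + a x) − c x` over `x ≥ 0`. -/
lemma per_k_aux (ωk ak c : ℝ) (hω : 0 < ωk) (ha : 0 < ak) (hc : 0 < c)
    (p : ℝ) (hp : 0 ≤ p) :
    ωk * Real.logb 2 (1 + ak * p) - c * p ≤
      ωk * Real.logb 2 (1 + ak * max (ωk / (Real.log 2 * c) - 1 / ak) 0)
        - c * max (ωk / (Real.log 2 * c) - 1 / ak) 0 := by
  set q := max (ωk / (Real.log 2 * c) - 1 / ak) 0 with hqdef
  have hL : 0 < Real.log 2 := Real.log_pos (by norm_num)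
  have hq0 : 0 ≤ q := le_max_right _ _
  have h1p : 0 < 1 + ak * p := by nlinarith
  have h1q : 0 < 1 + ak * q := by nlinarith
  have key : Real.log (1 + ak * p) - Real.log (1 + ak * q) ≤ ak * (p - q) / (1 + ak * q) := by
    have h := Real.log_le_sub_one_of_pos (div_pos h1p h1q)
    rw [Real.log_div (ne_of_gt h1p) (ne_of_gt h1q)] at h
    have heq : (1 + ak * p) / (1 + ak * q) - 1 = ak * (p - q) / (1 + ak * q) := by
      field_simp; ring
    linarith [heq ▸ h]
  have hslope : ωk * ak / (1 + ak * q) * (p - q) ≤ Real.log 2 * c * (p - q) := by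
    rcases le_or_gt (ωk / (Real.log 2 * c) - 1 / ak) 0 with hcase | hcase
    · have hq : q = 0 := max_eq_right hcase
      have h2 : ωk * ak ≤ Real.log 2 * c := by
        have := (div_le_div_iff₀ (by positivity) ha).mp
          (by linarith : ωk / (Real.log 2 * c) ≤ 1 / ak)
        nlinarith
      rw [hq]
      simp only [mul_zero, add_zero, div_one, sub_zero]
      nlinarith
    · have hq : q = ωk / (Real.log 2 * c) - 1 / ak := max_eq_left hcase.le
      have h1q' : 1 + ak * q = ak * ωk / (Real.log 2 * c) := by
        rw [hq]; field_simp; ring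
      rw [h1q']
      have heq2 : ωk * ak / (ak * ωk / (Real.log 2 * c)) = Real.log 2 * c := by
        field_simp
      rw [heq2]
  have hgoal : ωk * (Real.log (1 + ak * p) - Real.log (1 + ak * q)) ≤ Real.log 2 * (c * (p - q)) := by
    have h1 : ωk * (Real.log (1 + ak * p) - Real.log (1 + ak * q)) ≤
        ωk * (ak * (p - q) / (1 + ak * q)) := by nlinarith [key]
    have h2 : ωk * (ak * (p - q) / (1 + ak * q)) = ωk * ak / (1 + ak * q) * (p - q) := by ring
    nlinarith [hslope]
  unfold Real.logb
  rw [← sub_nonneg]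
  have expand : ωk * (Real.log (1 + ak * q) / Real.log 2) - c * q -
      (ωk * (Real.log (1 + ak * p) / Real.log 2) - c * p)
      = (Real.log 2 * (c * (p - q)) - ωk * (Real.log (1 + ak * p) - Real.log (1 + ak * q)))
          / Real.log 2 := by
    field_simp; ring
  rw [expand]
  exact div_nonneg (by linarith) hL.le

/-- The Lagrangian of problem (P1):
`L(μ,p,e) = ∑_k (ω_k log₂(1+a_k p_k) − (∑_i b_{ik} μ_i) p_k)
  + ∑_{i≠j} (β_{ij} μ_j − μ_i) e_{ij} + ∑_i μ_i E_i`. -/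
noncomputable def Lagrangian {N K : ℕ} (a : Fin K → ℝ) (b : Fin N → Fin K → ℝ)
    (ω : Fin K → ℝ) (E : Fin N → ℝ) (β : Fin N → Fin N → ℝ)
    (μ : Fin N → ℝ) (p : Fin K → ℝ) (e : Fin N → Fin N → ℝ) : ℝ :=
  (∑ k, (ω k * Real.logb 2 (1 + a k * p k) - (∑ i, b i k * μ i) * p k))
    + (∑ i, ∑ j, if i = j then 0 else (β i j * μ j - μ i) * e i j)
    + (∑ i, μ i * E i)

/-- The water-filling power allocation
`p_k(μ) = max (ω_k/(ln 2 · ∑_i b_{ik} μ_i) − 1/a_k) 0`. -/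
noncomputable def waterfillPower {N K : ℕ} (a : Fin K → ℝ) (b : Fin N → Fin K → ℝ)
    (ω : Fin K → ℝ) (μ : Fin N → ℝ) (k : Fin K) : ℝ :=
  max (ω k / (Real.log 2 * ∑ i, b i k * μ i) - 1 / a k) 0

/-- For dual-feasible `μ`, the pair `(p(μ), 0)` maximizes the Lagrangian over
the nonnegative orthant. -/
theorem waterfill_maximizes_lagrangian {N K : ℕ}
    (a : Fin K → ℝ) (b : Fin N → Fin K → ℝ) (ω : Fin K → ℝ)
    (E : Fin N → ℝ) (β : Fin N → Fin N → ℝ)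
    (hb : ∀ i k, 0 < b i k) (hω : ∀ k, 0 < ω k) (ha : ∀ k, 0 < a k)
    (μ : Fin N → ℝ)
    (hμ_nonneg : ∀ i, 0 ≤ μ i)
    (hμ_pos : ∃ i, 0 < μ i)
    (hμ_feas : ∀ i j : Fin N, i ≠ j → β i j * μ j ≤ μ i) :
    ∀ (p : Fin K → ℝ) (e : Fin N → Fin N → ℝ),
      (∀ k, 0 ≤ p k) → (∀ i j, i ≠ j → 0 ≤ e i j) →
      Lagrangian a b ω E β μ p e ≤
        Lagrangian a b ω E β μ (waterfillPower a b ω μ) 0 := by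
  intro p e hp he
  unfold Lagrangian
  have hc : ∀ k, 0 < ∑ i, b i k * μ i := by
    intro k
    obtain ⟨i0, hi0⟩ := hμ_pos
    have : ∀ i ∈ Finset.univ, 0 ≤ b i k * μ i := fun i _ =>
      mul_nonneg (hb i k).le (hμ_nonneg i)
    exact Finset.sum_pos' this ⟨i0, Finset.mem_univ i0, mul_pos (hb i0 k) hi0⟩
  gcongr ?_ + ?_ + ?_
  · apply Finset.sum_le_sum
    intro k _
    exact per_k_aux (ω k) (a k) _ (hω k) (ha k) (hc k) (p k) (hp k)
  · have h0 : (∑ i, ∑ j, if i = j then 0 else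
        (β i j * μ j - μ i) * (0 : Fin N → Fin N → ℝ) i j) = 0 := by simp
    rw [h0]
    apply Finset.sum_nonpos
    intro i _
    apply Finset.sum_nonpos
    intro j _
    by_cases hij : i = j
    · simp [hij]
    · simp only [hij, if_false]
      exact mul_nonpos_of_nonpos_of_nonneg (by linarith [hμ_feas i j hij]) (he i j hij)
  · exact le_rfl
end

section
/- Suppose β_{ij} = 1 for all i ≠ j (ideal lossless energy sharing), b_{ik} ≥ 0 for all i, k, and E_i are arbitrary reals. For any p with p_k ≥ 0 for all k, the following are equivalent: (i) there exists e with e_{ij} ≥ 0 for all i ≠ j such that ∑_k b_{ik} p_k ≤ E_i + ∑_{j≠i} e_{ji} − ∑_{j≠i} e_{ij} for every i; (ii) the single sum-power constraint ∑_i ∑_k b_{ik} p_k ≤ ∑_i E_i holds. (With ideal energy cooperation the N per-BS power constraints reduce to one sum-power constraint.) -/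
open Finset

/-- With ideal lossless energy sharing (`β_{ij} = 1` for all `i ≠ j`), the `N`
per-BS power constraints with some nonnegative energy exchange are equivalent
to the single sum-power constraint. -/
theorem ideal_sharing_iff_sum_power {N K : ℕ}
    (b : Fin N → Fin K → ℝ) (E : Fin N → ℝ)
    (β : Fin N → Fin N → ℝ) (hβ : ∀ i j : Fin N, i ≠ j → β i j = 1)
    (hb : ∀ i k, 0 ≤ b i k)
    (p : Fin K → ℝ) (hp : ∀ k, 0 ≤ p k) :
    (∃ e : Fin N → Fin N → ℝ, (∀ i j : Fin N, i ≠ j → 0 ≤ e i j) ∧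
      ∀ i, ∑ k, b i k * p k ≤
        E i + (∑ j, if j = i then 0 else e j i)
            - (∑ j, if j = i then 0 else e i j)) ↔
    (∑ i, ∑ k, b i k * p k ≤ ∑ i, E i) := by
  constructor
  · rintro ⟨e, he, h⟩
    have key : (∑ i, ∑ j, if j = i then (0:ℝ) else e j i)
        = ∑ i, ∑ j, if j = i then (0:ℝ) else e i j := by
      rw [Finset.sum_comm]
      refine Finset.sum_congr rfl fun i _ => Finset.sum_congr rfl fun j _ => ?_
      rcases eq_or_ne i j with hij | hij
      · simp [hij]
      · simp [hij, hij.symm]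
    have hs := Finset.sum_le_sum (fun i (_ : i ∈ (univ : Finset (Fin N))) => h i)
    simp only [Finset.sum_add_distrib, Finset.sum_sub_distrib] at hs
    linarith
  · intro h
    rcases Nat.eq_zero_or_pos N with hN | hN
    · subst hN
      exact ⟨0, fun i j _ => le_refl 0, fun i => i.elim0⟩
    set s : Fin N → ℝ := fun i => E i - ∑ k, b i k * p k with hs
    have hsum : 0 ≤ ∑ i, s i := by
      simp only [hs, Finset.sum_sub_distrib]
      linarith
    set i0 : Fin N := ⟨0, hN⟩
    refine ⟨fun i j => (if j = i0 then max (s i) 0 else 0)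
        + (if i = i0 then max (-(s j)) 0 else 0), ?_, ?_⟩
    · intro i j _
      dsimp only
      apply add_nonneg <;> split <;> positivity
    · intro i
      have hrest : (∑ j, if j = i then (0:ℝ) else s j) = (∑ j, s j) - s i := by
        rw [show (∑ j, if j = i then (0:ℝ) else s j)
              = ∑ j, (s j - if j = i then s j else 0) from
            Finset.sum_congr rfl fun j _ => by
              rcases eq_or_ne j i with hji | hji <;> simp [hji]]
        rw [Finset.sum_sub_distrib]
        simp [Finset.sum_ite_eq']
      by_cases hi : i = i0
      · have hin : (∑ j, if j = i then (0:ℝ) else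
            ((if i = i0 then max (s j) 0 else 0) + (if j = i0 then max (-(s i)) 0 else 0)))
            = ∑ j, if j = i then (0:ℝ) else max (s j) 0 := by
          refine Finset.sum_congr rfl fun j _ => ?_
          rcases eq_or_ne j i with hji | hji <;> simp [← hi, hji]
        have hout : (∑ j, if j = i then (0:ℝ) else
            ((if j = i0 then max (s i) 0 else 0) + (if i = i0 then max (-(s j)) 0 else 0)))
            = ∑ j, if j = i then (0:ℝ) else max (-(s j)) 0 := by
          refine Finset.sum_congr rfl fun j _ => ?_
          rcases eq_or_ne j i with hji | hji <;> simp [← hi, hji]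
        rw [hin, hout]
        have hnet : (∑ j, if j = i then (0:ℝ) else max (s j) 0)
            - (∑ j, if j = i then (0:ℝ) else max (-(s j)) 0)
            = ∑ j, if j = i then (0:ℝ) else s j := by
          rw [← Finset.sum_sub_distrib]
          refine Finset.sum_congr rfl fun j _ => ?_
          rcases eq_or_ne j i with hji | hji
          · simp [hji]
          · simp only [hji, if_neg hji]
            rcases le_total 0 (s j) with hsj | hsj
            · rw [max_eq_left hsj, max_eq_right (by linarith)]; simp
            · rw [max_eq_right hsj, max_eq_left (by linarith)]; simp
        have hsi : s i = E i - ∑ k, b i k * p k := by simp [hs]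
        rw [add_sub_assoc, hnet, hrest]
        linarith
      · have hin : (∑ j, if j = i then (0:ℝ) else
            ((if i = i0 then max (s j) 0 else 0) + (if j = i0 then max (-(s i)) 0 else 0)))
            = max (-(s i)) 0 := by
          rw [show (∑ j, if j = i then (0:ℝ) else
              ((if i = i0 then max (s j) 0 else 0) + (if j = i0 then max (-(s i)) 0 else 0)))
              = ∑ j, (if j = i0 then max (-(s i)) 0 else 0) from
            Finset.sum_congr rfl fun j _ => by
              rcases eq_or_ne j i with hji | hji
              · simp [hji, hi, Ne.symm hi]
              · simp [hji, hi]]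
          simp [Finset.sum_ite_eq']
        have hout : (∑ j, if j = i then (0:ℝ) else
            ((if j = i0 then max (s i) 0 else 0) + (if i = i0 then max (-(s j)) 0 else 0)))
            = max (s i) 0 := by
          rw [show (∑ j, if j = i then (0:ℝ) else
              ((if j = i0 then max (s i) 0 else 0) + (if i = i0 then max (-(s j)) 0 else 0)))
              = ∑ j, (if j = i0 then max (s i) 0 else 0) from
            Finset.sum_congr rfl fun j _ => by
              rcases eq_or_ne j i with hji | hji
              · simp [hji, hi, Ne.symm hi]
              · simp [hji, hi]]
          simp [Finset.sum_ite_eq']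
        rw [hin, hout]
        have hmax : max (-(s i)) 0 - max (s i) 0 = -(s i) := by
          rcases le_total 0 (s i) with hsi | hsi
          · rw [max_eq_left hsi, max_eq_right (by linarith)]; ring
          · rw [max_eq_right hsi, max_eq_left (by linarith)]; ring
        have hsi : s i = E i - ∑ k, b i k * p k := by simp [hs]
        rw [add_sub_assoc, hmax]
        linarith
end
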